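/- Let (X,G) be a Cantor dynamical system whose full group [G] has many involutions, and let V be a regular open subset of X. Then the centralizer in [G] of Γ_V = {γ ∈ [G] : spr(γ) ⊆ V} equals Γ_{V⊥} = {γ ∈ [G] : spr(γ) ⊆ X \ closure(V)}. -/

import Mathlib

open Set

variable {X : Type*} [TopologicalSpace X]

noncomputable instance Homeomorph.instGroup' : Group (X ≃ₜ X) where
  mul f g := g.trans f
  one := Homeomorph.refl X
  inv := Homeomorph.symm
  mul_assoc _ _ _ := Homeomorph.ext fun _ => rfl
  one_mul _ := Homeomorph.ext fun _ => rfl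
  mul_one _ := Homeomorph.ext fun _ => rfl
  inv_mul_cancel f := Homeomorph.ext fun x => f.symm_apply_apply x

@[simp] theorem Homeomorph.mul_apply' (f g : X ≃ₜ X) (x : X) : (f * g) x = f (g x) := rfl
@[simp] theorem Homeomorph.one_apply' (x : X) : (1 : X ≃ₜ X) x = x := rfl

/-- The support of a homeomorphism. -/
def spr (γ : X ≃ₜ X) : Set X := interior (closure {x | γ x ≠ x})

/-- The orbit of a point under a subgroup of homeomorphisms. -/
def orbitOf (G : Subgroup (X ≃ₜ X)) (x : X) : Set X := {y | ∃ g ∈ G, (g : X ≃ₜ X) x = y}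

/-- The full group of a Cantor dynamical system. -/
def fullGroup (G : Subgroup (X ≃ₜ X)) : Subgroup (X ≃ₜ X) where
  carrier := {γ | ∀ x, γ x ∈ orbitOf G x}
  one_mem' x := ⟨1, G.one_mem, rfl⟩
  mul_mem' {a b} ha hb x := by
    obtain ⟨h, hh, hbx⟩ := hb x
    obtain ⟨g, hg, hax⟩ := ha (b x)
    exact ⟨g * h, G.mul_mem hg hh, by simp only [Homeomorph.mul_apply'] at *; rw [hbx, hax]⟩
  inv_mem' {a} ha := by
    intro x
    obtain ⟨g, hg, hax⟩ := ha (a⁻¹ x)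
    refine ⟨g⁻¹, G.inv_mem hg, ?_⟩
    have : a (a⁻¹ x) = x := a.apply_symm_apply x
    rw [this] at hax
    have : (g⁻¹ : X ≃ₜ X) (g (a⁻¹ x)) = a⁻¹ x := g.symm_apply_apply _
    rw [hax] at this
    exact this


section Aux
variable {X : Type*} [TopologicalSpace X]

lemma moved_subset_spr [T2Space X] (γ : X ≃ₜ X) : {x | γ x ≠ x} ⊆ spr γ :=
  interior_maximal subset_closure (isOpen_ne_fun γ.continuous continuous_id)

lemma moved_mem {γ : X ≃ₜ X} {x : X} (h : γ x ≠ x) : γ x ∈ {y | γ y ≠ y} := by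
  intro hc
  exact h (γ.injective hc)

lemma comm_of_disjoint (f g : X ≃ₜ X)
    (h : ∀ x, f x ≠ x → g x = x) (h' : ∀ x, g x ≠ x → f x = x) : f * g = g * f := by
  ext x
  show f (g x) = g (f x)
  by_cases hf : f x = x
  · by_cases hg : g x = x
    · simp only [hf, hg]
    · have := h' _ (moved_mem hg)
      rw [hf, this]
  · have h1 := h _ hf
    have h2 := h _ (moved_mem hf)
    rw [h1, h2]
end Aux

/-- The centralizer of `Γ_V` in the full group is `Γ_(V⊥)`. -/
theorem centralizer_gammaV {X : Type*} [TopologicalSpace X] [CompactSpace X] [TopologicalSpace.MetrizableSpace X] [TotallyDisconnectedSpace X] [PerfectSpace X] [Nonempty X]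
    (G : Subgroup (X ≃ₜ X)) (hmi : ∀ A : Set X, A = interior (closure A) → A.Nonempty → ∃ π ∈ fullGroup G, π * π = 1 ∧ π ≠ 1 ∧ spr π ⊆ A)
    (V : Set X) (hV : V = interior (closure V)) :
    {ρ : X ≃ₜ X | ρ ∈ fullGroup G ∧ ∀ γ ∈ fullGroup G, spr γ ⊆ V → ρ * γ = γ * ρ}
      = {γ : X ≃ₜ X | γ ∈ fullGroup G ∧ spr γ ⊆ (closure V)ᶜ} := by
  ext ρ
  simp only [Set.mem_setOf_eq]
  constructor
  · rintro ⟨hρG, hcomm⟩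
    refine ⟨hρG, ?_⟩
    have hVopen : IsOpen V := hV ▸ isOpen_interior
    have hdisj : ∀ x, ρ x ≠ x → x ∉ V := by
      intro x hx hxV
      obtain ⟨U1, U2, hU1, hU2, hxU1, hρxU2, hU12⟩ := t2_separation (Ne.symm hx)
      have hN : IsOpen (V ∩ U1 ∩ ρ ⁻¹' U2) :=
        ((hVopen.inter hU1).inter (hU2.preimage ρ.continuous))
      obtain ⟨W, hWcl, hxW, hWN⟩ := compact_exists_isClopen_in_isOpen hN
        ⟨⟨hxV, hxU1⟩, hρxU2⟩
      have hWreg : W = interior (closure W) := by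
        rw [hWcl.isClosed.closure_eq, hWcl.isOpen.interior_eq]
      obtain ⟨π, hπG, hπ2, hπne, hπspr⟩ := hmi W hWreg ⟨x, hxW⟩
      have hπV : spr π ⊆ V := hπspr.trans fun y hy => ((hWN hy).1).1
      have hc := hcomm π hπG hπV
      obtain ⟨y, hy⟩ : ∃ y, π y ≠ y := by
        by_contra hall
        push_neg at hall
        exact hπne (Homeomorph.ext hall)
      have hyW : y ∈ W := hπspr (moved_subset_spr π hy)
      have hρy : ρ y ∉ W := by
        intro hc2
        have h2 : ρ y ∈ U2 := (hWN hyW).2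
        have h1 : ρ y ∈ U1 := ((hWN hc2).1).2
        exact Set.disjoint_left.mp hU12 h1 h2
      have hπρy : π (ρ y) = ρ y := by
        by_contra hne
        exact hρy (hπspr (moved_subset_spr π hne))
      have : ρ (π y) = π (ρ y) := Homeomorph.ext_iff.mp hc y
      rw [hπρy] at this
      exact hy (ρ.injective this)
    have hsub : {x | ρ x ≠ x} ⊆ Vᶜ := fun x hx => hdisj x hx
    have : closure {x | ρ x ≠ x} ⊆ Vᶜ :=
      closure_minimal hsub hVopen.isClosed_compl
    calc spr ρ ⊆ interior Vᶜ := interior_mono this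
      _ = (closure V)ᶜ := interior_compl
  · rintro ⟨hρG, hρspr⟩
    refine ⟨hρG, fun γ hγG hγspr => ?_⟩
    apply comm_of_disjoint
    · intro x hx
      by_contra hne
      have h1 : x ∈ (closure V)ᶜ := hρspr (moved_subset_spr ρ hx)
      have h2 : x ∈ V := hγspr (moved_subset_spr γ hne)
      exact h1 (subset_closure h2)
    · intro x hx
      by_contra hne
      have h1 : x ∈ (closure V)ᶜ := hρspr (moved_subset_spr ρ hne)
      have h2 : x ∈ V := hγspr (moved_subset_spr γ hx)
      exact h1 (subset_closure h2)
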